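/- arXiv:1602.05082 — 7 statements merged into one kernel-verified Lean document; each statement's English description precedes it below -/
import Mathlib

section
/- Let B be a finite connected groupoid (nonempty, with any two objects isomorphic), let b be an object of B, let p : E ⥤ B be a functor of groupoids, and let F = (b ↓ p) be the homotopy fibre of p over b. Then E is a finite groupoid if and only if F is a finite groupoid, and in that case |E| = |F| · |B|; equivalently, |F| = |E| · #Aut(b). -/
open CategoryTheory

/-- Isomorphism classes of objects of a category. -/
abbrev IsoCls (C : Type*) [Category C] := Quotient (CategoryTheory.isIsomorphicSetoid C)

/-- A category is finite (as a homotopy type) if all hom-sets are finite and it has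
finitely many isomorphism classes of objects. -/
def FiniteCat (C : Type*) [Category C] : Prop :=
  (∀ x y : C, Finite (x ⟶ y)) ∧ Finite (IsoCls C)

/-- Homotopy cardinality: the sum over isomorphism classes of the reciprocal of the
order of the automorphism group. -/
noncomputable def gcard (C : Type*) [Category C] : ℚ :=
  ∑ᶠ X : IsoCls C, (Nat.card (Aut X.out) : ℚ)⁻¹

namespace FibreAux
attribute [local instance] CategoryTheory.isIsomorphicSetoid

lemma autCard_congr {C : Type*} [Category C] {x y : C} (u : x ≅ y) :
    Nat.card (Aut x) = Nat.card (Aut y) := Nat.card_congr u.conjAut.toEquiv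

lemma autCard_out {C : Type*} [Category C] (x : C) :
    Nat.card (Aut (Quotient.mk (CategoryTheory.isIsomorphicSetoid C) x).out)
      = Nat.card (Aut x) := by
  obtain ⟨u⟩ := (Quotient.mk_out (s := CategoryTheory.isIsomorphicSetoid C) x :
    CategoryTheory.IsIsomorphic _ x)
  exact autCard_congr u

lemma finite_iso {C : Type*} [Groupoid C] {x y : C} (h : Finite (x ⟶ y)) : Finite (x ≅ y) :=
  Finite.of_equiv _ (Groupoid.isoEquivHom x y).symm

lemma homCard {C : Type*} [Groupoid C] {x y : C} (h : Nonempty (x ≅ y)) :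
    Nat.card (x ⟶ y) = Nat.card (Aut x) := by
  obtain ⟨u⟩ := h
  exact Nat.card_congr ((Iso.homCongr (Iso.refl x) u.symm).trans (Groupoid.isoEquivHom x x).symm)

variable {E B : Type*} [Groupoid E] [Groupoid B] (b : B) (p : E ⥤ B)

def clsMap : IsoCls (StructuredArrow b p) → IsoCls E :=
  Quotient.map (fun A => A.right)
    (fun _ _ h => h.elim fun u => ⟨(StructuredArrow.proj b p).mapIso u⟩)

variable {e : E}

lemma clsMap_mk (φ : b ⟶ p.obj e) :
    clsMap b p ⟦StructuredArrow.mk φ⟧ = ⟦e⟧ := rfl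

lemma mk_cls_eq_iff (φ ψ : b ⟶ p.obj e) :
    (⟦StructuredArrow.mk φ⟧ : IsoCls (StructuredArrow b p)) = ⟦StructuredArrow.mk ψ⟧ ↔
      ∃ g : Aut e, φ ≫ p.map g.hom = ψ := by
  constructor
  · intro h
    obtain ⟨u⟩ := Quotient.exact h
    refine ⟨(Groupoid.isoEquivHom e e).symm u.hom.right, ?_⟩
    simpa using StructuredArrow.w u.hom
  · rintro ⟨g, rfl⟩
    exact Quotient.sound ⟨StructuredArrow.isoMk (g : e ≅ e) (by simp)⟩

lemma mk_cls_surj (Y : IsoCls (StructuredArrow b p)) (h : clsMap b p Y = ⟦e⟧) :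
    ∃ φ : b ⟶ p.obj e, (⟦StructuredArrow.mk φ⟧ : IsoCls (StructuredArrow b p)) = Y := by
  induction Y using Quotient.ind with
  | _ A =>
    obtain ⟨u⟩ := (Quotient.exact h : CategoryTheory.IsIsomorphic A.right e)
    exact ⟨A.hom ≫ p.map u.hom,
      Quotient.sound ⟨(StructuredArrow.isoMk u (by simp)).symm⟩⟩

def autAct (e : E) : MulAction (Aut e) (b ⟶ p.obj e) where
  smul g φ := φ ≫ p.map g.hom
  one_smul φ := by show φ ≫ p.map (𝟙 e) = φ; simp
  mul_smul g h φ := by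
    show φ ≫ p.map (h.hom ≫ g.hom) = (φ ≫ p.map h.hom) ≫ p.map g.hom
    simp

def stabEquiv (φ : b ⟶ p.obj e) :
    letI := autAct b p e
    Aut (StructuredArrow.mk φ) ≃ MulAction.stabilizer (Aut e) φ :=
  letI := autAct b p e
  { toFun := fun u => ⟨(Groupoid.isoEquivHom e e).symm u.hom.right, by
      refine MulAction.mem_stabilizer_iff.mpr ?_
      show φ ≫ p.map u.hom.right = φ
      simpa using StructuredArrow.w u.hom⟩
    invFun := fun g => StructuredArrow.isoMk (g.1 : e ≅ e) (g.2)
    left_inv := fun u => by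
      apply Iso.ext
      apply StructuredArrow.hom_ext
      rfl
    right_inv := fun g => by
      apply Subtype.ext
      apply Iso.ext
      rfl }

lemma fiber_card (hE1 : Finite (e ⟶ e)) (hS : Finite (b ⟶ p.obj e)) (φ : b ⟶ p.obj e) :
    Nat.card {ψ : b ⟶ p.obj e //
        (⟦StructuredArrow.mk ψ⟧ : IsoCls (StructuredArrow b p)) = ⟦StructuredArrow.mk φ⟧}
      * Nat.card (Aut (StructuredArrow.mk φ)) = Nat.card (Aut e) := by
  letI := autAct b p e
  haveI : Finite (Aut e) := finite_iso hE1
  haveI : Finite (b ⟶ p.obj e) := hS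
  have e1 : {ψ : b ⟶ p.obj e //
      (⟦StructuredArrow.mk ψ⟧ : IsoCls (StructuredArrow b p)) = ⟦StructuredArrow.mk φ⟧}
      ≃ MulAction.orbit (Aut e) φ := Equiv.subtypeEquivRight fun ψ => by
    rw [mk_cls_eq_iff]
    constructor
    · rintro ⟨g, h⟩
      exact MulAction.mem_orbit_iff.mpr ⟨g⁻¹, by rw [← h]; exact inv_smul_smul g ψ⟩
    · intro h
      obtain ⟨g, h⟩ := MulAction.mem_orbit_iff.mp h
      exact ⟨g⁻¹, by rw [← h]; exact inv_smul_smul g φ⟩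
  rw [Nat.card_congr e1, Nat.card_congr (stabEquiv b p φ)]
  letI : Fintype (Aut e) := Fintype.ofFinite _
  letI : Fintype (b ⟶ p.obj e) := Fintype.ofFinite _
  letI : Fintype (MulAction.orbit (Aut e) φ) := Fintype.ofFinite _
  letI : Fintype (MulAction.stabilizer (Aut e) φ) := Fintype.ofFinite _
  simp only [Nat.card_eq_fintype_card]
  exact MulAction.card_orbit_mul_card_stabilizer_eq_card_group _ _

lemma inner_sum (hE1 : Finite (e ⟶ e)) (hS : Finite (b ⟶ p.obj e)) :
    ∑ᶠ Y : {Y : IsoCls (StructuredArrow b p) // clsMap b p Y = ⟦e⟧},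
        (Nat.card (Aut (Y.1.out)) : ℚ)⁻¹
      = (Nat.card (b ⟶ p.obj e) : ℚ) / (Nat.card (Aut e) : ℚ) := by
  classical
  haveI : Finite (b ⟶ p.obj e) := hS
  haveI : Finite (Aut e) := finite_iso hE1
  letI : Fintype (Aut e) := Fintype.ofFinite _
  let m : (b ⟶ p.obj e) → {Y : IsoCls (StructuredArrow b p) // clsMap b p Y = ⟦e⟧} :=
    fun φ => ⟨⟦StructuredArrow.mk φ⟧, clsMap_mk b p φ⟩
  have hsurj : Function.Surjective m := fun Y => by
    obtain ⟨φ, hφ⟩ := mk_cls_surj b p Y.1 Y.2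
    exact ⟨φ, Subtype.ext hφ⟩
  haveI : Finite {Y : IsoCls (StructuredArrow b p) // clsMap b p Y = ⟦e⟧} :=
    Finite.of_surjective m hsurj
  letI : Fintype (b ⟶ p.obj e) := Fintype.ofFinite _
  letI : Fintype {Y : IsoCls (StructuredArrow b p) // clsMap b p Y = ⟦e⟧} := Fintype.ofFinite _
  rw [finsum_eq_sum_of_fintype]
  have hkey : ∀ φ : b ⟶ p.obj e,
      (Fintype.card {ψ : b ⟶ p.obj e // m ψ = m φ} : ℚ)⁻¹
        * (Nat.card (Aut ((m φ).1.out)) : ℚ)⁻¹ = (Nat.card (Aut e) : ℚ)⁻¹ := by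
    intro φ
    have h1 : Nat.card (Aut ((m φ).1.out)) = Nat.card (Aut (StructuredArrow.mk φ)) :=
      autCard_out _
    have h2 : Fintype.card {ψ : b ⟶ p.obj e // m ψ = m φ}
        = Nat.card {ψ : b ⟶ p.obj e //
            (⟦StructuredArrow.mk ψ⟧ : IsoCls (StructuredArrow b p)) = ⟦StructuredArrow.mk φ⟧} := by
      rw [Nat.card_eq_fintype_card]
      exact Fintype.card_congr (Equiv.subtypeEquivRight fun ψ => by
        simp only [m, Subtype.ext_iff])
    rw [h1, h2, ← mul_inv, ← Nat.cast_mul, fiber_card b p hE1 hS φ]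
  calc ∑ Y : {Y : IsoCls (StructuredArrow b p) // clsMap b p Y = ⟦e⟧},
        (Nat.card (Aut (Y.1.out)) : ℚ)⁻¹
      = ∑ Y : {Y : IsoCls (StructuredArrow b p) // clsMap b p Y = ⟦e⟧},
          ∑ _φ : {φ : b ⟶ p.obj e // m φ = Y},
            (Fintype.card {φ : b ⟶ p.obj e // m φ = Y} : ℚ)⁻¹
              * (Nat.card (Aut (Y.1.out)) : ℚ)⁻¹ := by
        refine Finset.sum_congr rfl fun Y _ => ?_
        have hpos : 0 < Fintype.card {φ : b ⟶ p.obj e // m φ = Y} := by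
          obtain ⟨φ, hφ⟩ := hsurj Y
          exact Fintype.card_pos_iff.mpr ⟨⟨φ, hφ⟩⟩
        rw [Finset.sum_const, Finset.card_univ, nsmul_eq_mul, ← mul_assoc,
          mul_inv_cancel₀ (by exact_mod_cast hpos.ne'), one_mul]
    _ = ∑ φ : b ⟶ p.obj e,
          (Fintype.card {ψ : b ⟶ p.obj e // m ψ = m φ} : ℚ)⁻¹
            * (Nat.card (Aut ((m φ).1.out)) : ℚ)⁻¹ :=
        Fintype.sum_fiberwise' m (fun Y => (Fintype.card {φ : b ⟶ p.obj e // m φ = Y} : ℚ)⁻¹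
          * (Nat.card (Aut (Y.1.out)) : ℚ)⁻¹)
    _ = ∑ _φ : b ⟶ p.obj e, (Nat.card (Aut e) : ℚ)⁻¹ :=
        Finset.sum_congr rfl fun φ _ => hkey φ
    _ = (Nat.card (b ⟶ p.obj e) : ℚ) / (Nat.card (Aut e) : ℚ) := by
        rw [Finset.sum_const, Finset.card_univ, nsmul_eq_mul, Nat.card_eq_fintype_card,
          Nat.card_eq_fintype_card, div_eq_mul_inv]

lemma fiber_finite (hB1 : ∀ x y : B, Finite (x ⟶ y)) (X : IsoCls E) :
    Finite {Y : IsoCls (StructuredArrow b p) // clsMap b p Y = X} := by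
  rw [← Quotient.out_eq X]
  haveI : Finite (b ⟶ p.obj X.out) := hB1 _ _
  exact Finite.of_surjective
    (fun φ : b ⟶ p.obj X.out => (⟨⟦StructuredArrow.mk φ⟧, clsMap_mk b p φ⟩ :
      {Y : IsoCls (StructuredArrow b p) // clsMap b p Y = ⟦X.out⟧}))
    (fun Y => by
      obtain ⟨φ, hφ⟩ := mk_cls_surj b p Y.1 Y.2
      exact ⟨φ, Subtype.ext hφ⟩)

lemma finiteF (hB1 : ∀ x y : B, Finite (x ⟶ y)) (hE : FiniteCat E) :
    FiniteCat (StructuredArrow b p) := by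
  obtain ⟨hE1, hE2⟩ := hE
  constructor
  · intro A A'
    haveI : Finite (A.right ⟶ A'.right) := hE1 _ _
    exact Finite.of_injective (fun f => f.right)
      (fun f g h => StructuredArrow.hom_ext f g h)
  · haveI := hE2
    haveI : ∀ X : IsoCls E, Finite {Y : IsoCls (StructuredArrow b p) // clsMap b p Y = X} :=
      fiber_finite b p hB1
    exact Finite.of_equiv _ (Equiv.sigmaFiberEquiv (clsMap b p))

lemma finiteE (hconn : ∀ x y : B, Nonempty (x ≅ y)) (hB1 : ∀ x y : B, Finite (x ⟶ y))
    (hF : FiniteCat (StructuredArrow b p)) : FiniteCat E := by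
  obtain ⟨hF1, hF2⟩ := hF
  constructor
  · intro x y
    have φ : b ⟶ p.obj x := (hconn b (p.obj x)).some.hom
    haveI : Finite (b ⟶ p.obj y) := hB1 _ _
    haveI : ∀ ψ : b ⟶ p.obj y,
        Finite ((StructuredArrow.mk φ) ⟶ (StructuredArrow.mk ψ)) := fun ψ => hF1 _ _
    exact Finite.of_surjective
      (fun s : Σ ψ : b ⟶ p.obj y, (StructuredArrow.mk φ) ⟶ (StructuredArrow.mk ψ) =>
        (s.2.right : x ⟶ y))
      (fun f => ⟨⟨φ ≫ p.map f, StructuredArrow.homMk f (by simp)⟩, rfl⟩)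
  · haveI := hF2
    exact Finite.of_surjective (clsMap b p) (fun X => by
      induction X using Quotient.ind with
      | _ x =>
        exact ⟨⟦StructuredArrow.mk ((hconn b (p.obj x)).some.hom)⟧, rfl⟩)

end FibreAux

open FibreAux

/-- Fibre sequence multiplicativity: for `B` a finite connected groupoid, `b : B`,
`p : E ⥤ B` with homotopy fibre `F = (b ↓ p)`, `E` is finite iff `F` is finite, and
in that case `|E| = |F| · |B|`, equivalently `|F| = |E| · #Aut(b)`. -/
theorem fibre_sequence_card {E B : Type*} [Groupoid E] [Groupoid B]
    [Nonempty B] (hconn : ∀ x y : B, Nonempty (x ≅ y)) (hB : FiniteCat B)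
    (b : B) (p : E ⥤ B) :
    (FiniteCat E ↔ FiniteCat (StructuredArrow b p)) ∧
    (FiniteCat E →
      gcard E = gcard (StructuredArrow b p) * gcard B ∧
      gcard (StructuredArrow b p) = gcard E * (Nat.card (Aut b) : ℚ)) := by
  classical
  obtain ⟨hB1, hB2⟩ := hB
  refine ⟨⟨finiteF b p hB1, finiteE b p hconn hB1⟩, fun hE => ?_⟩
  have hF := finiteF b p hB1 hE
  obtain ⟨hE1, hE2⟩ := hE
  haveI := hE2
  haveI := hF.2
  letI : Fintype (IsoCls E) := Fintype.ofFinite _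
  letI : Fintype (IsoCls (StructuredArrow b p)) := Fintype.ofFinite _
  have hfinAb : Finite (Aut b) := finite_iso (hB1 b b)
  have hAb : (Nat.card (Aut b) : ℚ) ≠ 0 := by
    exact_mod_cast (Nat.card_ne_zero.mpr ⟨⟨Iso.refl b⟩, hfinAb⟩)
  -- the key computation
  have key : gcard (StructuredArrow b p) = gcard E * (Nat.card (Aut b) : ℚ) := by
    unfold gcard
    rw [finsum_eq_sum_of_fintype, finsum_eq_sum_of_fintype,
      ← Fintype.sum_fiberwise (clsMap b p)
        (fun Y : IsoCls (StructuredArrow b p) => (Nat.card (Aut Y.out) : ℚ)⁻¹),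
      Finset.sum_mul]
    refine Finset.sum_congr rfl fun X _ => ?_
    induction X using Quotient.ind with
    | _ e =>
      rw [← finsum_eq_sum_of_fintype, inner_sum b p (hE1 e e) (hB1 b (p.obj e)),
        homCard (hconn b (p.obj e)), autCard_out, div_eq_mul_inv, mul_comm]
  refine ⟨?_, key⟩
  -- gcard B = (#Aut b)⁻¹
  haveI : Subsingleton (IsoCls B) := ⟨fun X Y =>
    Quotient.inductionOn₂ X Y fun x y => Quotient.sound (hconn x y)⟩
  haveI : Unique (IsoCls B) := uniqueOfSubsingleton ⟦b⟧
  have hgB : gcard B = (Nat.card (Aut b) : ℚ)⁻¹ := by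
    unfold gcard
    rw [finsum_unique]
    have hd : (default : IsoCls B) = ⟦b⟧ := Subsingleton.elim _ _
    rw [hd, autCard_out b]
  rw [key, hgB, mul_assoc, mul_inv_cancel₀ hAb, mul_one]
end

section
/- Let B be a locally finite groupoid and let p : E ⥤ B be a functor of groupoids. Then E is a finite groupoid if and only if every homotopy fibre E_b = (b ↓ p) is a finite groupoid and E_b is nonempty for only finitely many isomorphism classes [b] of objects of B. In that case |E| = Σ_{[b]∈π₀B} |E_b| / #Aut(b), the sum ranging over the isomorphism classes of objects of B. -/
open CategoryTheory

/-- A category is locally finite if all of its hom-sets are finite. -/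
def LocallyFiniteCat (C : Type*) [Category C] : Prop := ∀ x y : C, Finite (x ⟶ y)

attribute [local instance] CategoryTheory.isIsomorphicSetoid
open scoped Classical

section Helpers

lemma autCard_eq_of_iso {C : Type*} [Category C] {X Y : C} (i : X ≅ Y) :
    Nat.card (Aut X) = Nat.card (Aut Y) :=
  Nat.card_congr ⟨fun a => i.symm ≪≫ a ≪≫ i, fun a => i ≪≫ a ≪≫ i.symm,
    fun (a : X ≅ X) => by ext; simp, fun (a : Y ≅ Y) => by ext; simp⟩

variable {E B : Type*} [Groupoid E] [Groupoid B] (p : E ⥤ B)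

/-- automorphisms of `mk φ` in the fibre correspond to kernel elements -/
lemma autMkCard {b : B} {e : E} (φ : b ⟶ p.obj e) :
    Nat.card (Aut (StructuredArrow.mk φ : StructuredArrow b p)) =
      Nat.card {ψ : e ⟶ e // p.map ψ = 𝟙 (p.obj e)} := by
  apply Nat.card_congr
  refine ⟨fun a => ⟨a.hom.right, ?_⟩, fun k => StructuredArrow.isoMk (asIso k.1) ?_, ?_, ?_⟩
  · have w := StructuredArrow.w a.hom
    simp only [StructuredArrow.mk_hom_eq_self] at w
    rw [← cancel_epi φ, Category.comp_id]
    exact w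
  · simp [k.2]
  · intro a
    apply Iso.ext
    apply StructuredArrow.hom_ext
    simp
  · intro k
    apply Subtype.ext
    simp

lemma cardEndDecomp (e : E) [Finite (e ⟶ e)] :
    Nat.card (e ⟶ e) =
      Nat.card {β : p.obj e ⟶ p.obj e // ∃ ψ : e ⟶ e, p.map ψ = β} *
        Nat.card {ψ : e ⟶ e // p.map ψ = 𝟙 (p.obj e)} := by
  set Im := {β : p.obj e ⟶ p.obj e // ∃ ψ : e ⟶ e, p.map ψ = β} with hIm
  set K := {ψ : e ⟶ e // p.map ψ = 𝟙 (p.obj e)} with hK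
  have toIm : (e ⟶ e) → Im := fun ψ => ⟨p.map ψ, ψ, rfl⟩
  have fe : ∀ β : Im, {ψ : e ⟶ e // (⟨p.map ψ, ψ, rfl⟩ : Im) = β} ≃ K := by
    intro β
    obtain ⟨ψ₀, h₀⟩ := Classical.indefiniteDescription _ β.2
    refine ⟨fun x => ⟨x.1 ≫ inv ψ₀, ?_⟩, fun k => ⟨k.1 ≫ ψ₀, ?_⟩, ?_, ?_⟩
    · have hx : p.map x.1 = β.1 := congrArg Subtype.val x.2
      simp [hx, ← h₀]
    · apply Subtype.ext
      simp [k.2, h₀]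
    · intro x; apply Subtype.ext; simp
    · intro k; apply Subtype.ext; simp
  calc Nat.card (e ⟶ e) = Nat.card (Σ β : Im, {ψ : e ⟶ e // (⟨p.map ψ, ψ, rfl⟩ : Im) = β}) :=
        (Nat.card_congr (Equiv.sigmaFiberEquiv (fun ψ : (e ⟶ e) => (⟨p.map ψ, ψ, rfl⟩ : Im)))).symm
    _ = Nat.card (Im × K) := Nat.card_congr ((Equiv.sigmaCongrRight fe).trans (Equiv.sigmaEquivProd Im K))
    _ = _ := by rw [Nat.card_prod]

end Helpers
section L2
variable {E B : Type*} [Groupoid E] [Groupoid B] (p : E ⥤ B)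

/-- the relation on `b₀ ⟶ p.obj e` identifying arrows that give isomorphic fibre objects -/
def fibSetoid (b₀ : B) (e : E) : Setoid (b₀ ⟶ p.obj e) where
  r φ φ' := ∃ ψ : e ⟶ e, φ ≫ p.map ψ = φ'
  iseqv := by
    refine ⟨fun φ => ⟨𝟙 e, by simp⟩, ?_, ?_⟩
    · rintro φ φ' ⟨ψ, h⟩
      exact ⟨inv ψ, by rw [← h]; simp⟩
    · rintro φ φ' φ'' ⟨ψ, h⟩ ⟨ψ', h'⟩
      exact ⟨ψ ≫ ψ', by rw [← h', ← h]; simp⟩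

/-- the map on iso classes induced by the projection from the fibre -/
def qmap (b₀ : B) : IsoCls (StructuredArrow b₀ p) → IsoCls E :=
  Quotient.map (fun y => y.right)
    (fun _ _ h => h.elim fun i => ⟨(StructuredArrow.proj b₀ p).mapIso i⟩)

/-- the map on iso classes induced by `p` -/
def pcls : IsoCls E → IsoCls B :=
  Quotient.map p.obj (fun _ _ h => h.elim fun i => ⟨p.mapIso i⟩)

end L2

section Main
variable {E B : Type*} [Groupoid E] [Groupoid B] (p : E ⥤ B)

lemma L2 (hB : ∀ x y : B, Finite (x ⟶ y)) (b₀ : B)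
    [Fintype (IsoCls (StructuredArrow b₀ p))] (e : E) [Finite (e ⟶ e)]
    (φ₀ : b₀ ⟶ p.obj e) :
    ∑ x ∈ Finset.univ.filter (fun x : IsoCls (StructuredArrow b₀ p) => qmap p b₀ x = ⟦e⟧),
        (Nat.card (Aut x.out) : ℚ)⁻¹
      = (Nat.card (Aut b₀) : ℚ) / (Nat.card (Aut e) : ℚ) := by
  classical
  haveI : Finite (b₀ ⟶ p.obj e) := hB _ _
  haveI : Fintype (Quotient (fibSetoid p b₀ e)) := Fintype.ofFinite _
  set K := {ψ : e ⟶ e // p.map ψ = 𝟙 (p.obj e)} with hK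
  set Im := {β : p.obj e ⟶ p.obj e // ∃ ψ : e ⟶ e, p.map ψ = β} with hIm
  -- the map from the quotient to iso classes of the fibre
  set M : Quotient (fibSetoid p b₀ e) → IsoCls (StructuredArrow b₀ p) :=
    Quotient.map (fun φ => StructuredArrow.mk φ)
      (fun φ φ' h => h.elim fun ψ hψ => ⟨StructuredArrow.isoMk (asIso ψ) (by simpa using hψ)⟩)
    with hM
  -- step 1 : the sum equals ∑ _ : Quotient, (#K)⁻¹
  have step1 : ∑ x ∈ Finset.univ.filter
        (fun x : IsoCls (StructuredArrow b₀ p) => qmap p b₀ x = ⟦e⟧),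
        (Nat.card (Aut x.out) : ℚ)⁻¹
      = ∑ _t : Quotient (fibSetoid p b₀ e), (Nat.card K : ℚ)⁻¹ := by
    refine (Finset.sum_bij (fun t _ => M t) ?_ ?_ ?_ ?_).symm
    · intro t _
      induction t using Quotient.ind with
      | _ φ =>
        simp only [Finset.mem_filter, Finset.mem_univ, true_and, hM, qmap, Quotient.map_mk]
        exact Finset.mem_filter.2 ⟨Finset.mem_univ _, rfl⟩
    · intro t₁ _ t₂ _ h
      induction t₁ using Quotient.ind with
      | _ φ₁ =>
      induction t₂ using Quotient.ind with
      | _ φ₂ =>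
        simp only [hM, Quotient.map_mk] at h
        obtain ⟨α⟩ := Quotient.exact h
        refine Quotient.sound ⟨α.hom.right, ?_⟩
        simpa using StructuredArrow.w α.hom
    · intro x hx
      induction x using Quotient.ind with
      | _ y =>
        simp only [Finset.mem_filter, Finset.mem_univ, true_and, qmap, Set.mem_setOf_eq, Quotient.map_mk] at hx
        have hx' : (⟦y.right⟧ : IsoCls E) = ⟦e⟧ := (Finset.mem_filter.1 hx).2
        obtain ⟨ψ⟩ := Quotient.exact hx'
        refine ⟨⟦y.hom ≫ p.map ψ.hom⟧, Finset.mem_univ _, ?_⟩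
        simp only [hM, Quotient.map_mk]
        exact Quotient.sound ⟨(StructuredArrow.isoMk ψ (by simp)).symm⟩
    · intro t _
      induction t using Quotient.ind with
      | _ φ =>
        show (Nat.card K : ℚ)⁻¹ = (Nat.card (Aut (M ⟦φ⟧).out) : ℚ)⁻¹
        have hMφ : M ⟦φ⟧ = ⟦StructuredArrow.mk φ⟧ := by simp [hM, Quotient.map_mk]
        rw [hMφ]
        obtain ⟨i⟩ := Quotient.mk_out (s := isIsomorphicSetoid (StructuredArrow b₀ p))
          (StructuredArrow.mk φ)
        rw [autCard_eq_of_iso i, autMkCard]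
  rw [step1]
  haveI : Finite K := Subtype.finite
  haveI : Finite (p.obj e ⟶ p.obj e) := hB _ _
  haveI : Finite Im := Subtype.finite
  haveI : Nonempty K := ⟨⟨𝟙 e, p.map_id e⟩⟩
  haveI : Nonempty Im := ⟨⟨𝟙 _, 𝟙 e, p.map_id e⟩⟩
  have count1 : Nat.card (b₀ ⟶ p.obj e)
      = Nat.card (Quotient (fibSetoid p b₀ e)) * Nat.card Im := by
    have fe : ∀ t : Quotient (fibSetoid p b₀ e), {φ : b₀ ⟶ p.obj e // ⟦φ⟧ = t} ≃ Im := by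
      intro t
      have hmk : (⟦t.out⟧ : Quotient (fibSetoid p b₀ e)) = t := t.out_eq
      refine ⟨fun x => ⟨inv t.out ≫ x.1, ?_⟩, fun β => ⟨t.out ≫ β.1, ?_⟩, ?_, ?_⟩
      · obtain ⟨ψ, hψ⟩ := Quotient.exact (hmk.trans x.2.symm)
        exact ⟨ψ, by rw [← hψ]; simp⟩
      · refine ((Quotient.sound ?_).symm.trans hmk :)
        obtain ⟨ψ, hψ⟩ := β.2
        exact ⟨ψ, by rw [hψ]⟩
      · intro x; apply Subtype.ext; simp
      · intro β; apply Subtype.ext; simp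
    calc Nat.card (b₀ ⟶ p.obj e)
        = Nat.card (Σ t : Quotient (fibSetoid p b₀ e), {φ : b₀ ⟶ p.obj e // ⟦φ⟧ = t}) :=
          (Nat.card_congr (Equiv.sigmaFiberEquiv _)).symm
      _ = Nat.card (Quotient (fibSetoid p b₀ e) × Im) :=
          Nat.card_congr ((Equiv.sigmaCongrRight fe).trans (Equiv.sigmaEquivProd _ _))
      _ = _ := Nat.card_prod _ _
  have count2 : Nat.card (e ⟶ e) = Nat.card Im * Nat.card K := cardEndDecomp p e
  have count3 : Nat.card (Aut b₀) = Nat.card (b₀ ⟶ p.obj e) := by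
    refine Nat.card_congr ⟨fun γ => γ.hom ≫ φ₀, fun s => asIso (s ≫ inv φ₀), ?_, ?_⟩
    · intro γ; apply Iso.ext; simp
    · intro s; simp
  have count4 : Nat.card (Aut e) = Nat.card (e ⟶ e) :=
    Nat.card_congr (Groupoid.isoEquivHom e e)
  have hKne : (Nat.card K : ℚ) ≠ 0 := by
    exact_mod_cast (Nat.card_pos (α := K)).ne'
  have hIne : (Nat.card Im : ℚ) ≠ 0 := by
    exact_mod_cast (Nat.card_pos (α := Im)).ne'
  rw [Finset.sum_const, Finset.card_univ, nsmul_eq_mul, ← Nat.card_eq_fintype_card]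
  have c1 : (Nat.card (b₀ ⟶ p.obj e) : ℚ)
      = (Nat.card (Quotient (fibSetoid p b₀ e)) : ℚ) * (Nat.card Im : ℚ) := by
    exact_mod_cast congrArg (Nat.cast : ℕ → ℚ) count1
  rw [count3, count4, count2, c1]
  push_cast
  field_simp

lemma fib_homFinite (hE : ∀ x y : E, Finite (x ⟶ y)) (b : B)
    (x y : StructuredArrow b p) : Finite (x ⟶ y) := by
  haveI : Finite (x.right ⟶ y.right) := hE _ _
  exact Finite.of_injective (fun f => f.right) fun f g h => StructuredArrow.hom_ext f g h

lemma fib_clsFinite (hB : ∀ x y : B, Finite (x ⟶ y)) [Finite (IsoCls E)] (b : B) :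
    Finite (IsoCls (StructuredArrow b p)) := by
  haveI : ∀ c : IsoCls E, Finite (b ⟶ p.obj c.out) := fun c => hB _ _
  refine Finite.of_surjective
    (fun z : Σ c : IsoCls E, (b ⟶ p.obj c.out) => (⟦StructuredArrow.mk z.2⟧ : _)) ?_
  intro x
  induction x using Quotient.ind with
  | _ y =>
    obtain ⟨i⟩ := Quotient.mk_out (s := isIsomorphicSetoid E) y.right
    refine ⟨⟨⟦y.right⟧, y.hom ≫ p.map i.inv⟩, Quotient.sound ⟨?_⟩⟩
    exact StructuredArrow.isoMk i (by simp)

lemma set_finite_of_clsFinite [Finite (IsoCls E)] :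
    {b : IsoCls B | Nonempty (StructuredArrow b.out p)}.Finite := by
  refine (Set.finite_range (pcls p)).subset ?_
  rintro b ⟨y⟩
  refine ⟨⟦y.right⟧, ?_⟩
  have h1 : pcls p ⟦y.right⟧ = ⟦p.obj y.right⟧ := Quotient.map_mk _ _ _
  rw [h1]
  exact (Quotient.sound ⟨(asIso y.hom).symm⟩ : (⟦p.obj y.right⟧ : IsoCls B) = ⟦b.out⟧).trans
    b.out_eq

lemma homFinite_of_fib (hB : ∀ x y : B, Finite (x ⟶ y))
    (hfib : ∀ b : B, ∀ x y : StructuredArrow b p, Finite (x ⟶ y)) (e e' : E) :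
    Finite (e ⟶ e') := by
  haveI : Finite (p.obj e ⟶ p.obj e') := hB _ _
  haveI : ∀ β : p.obj e ⟶ p.obj e', Finite {ψ : e ⟶ e' // p.map ψ = β} := by
    intro β
    haveI : Finite ((StructuredArrow.mk (𝟙 (p.obj e)) : StructuredArrow (p.obj e) p) ⟶
        StructuredArrow.mk β) := hfib (p.obj e) _ _
    refine Finite.of_injective
      (fun x => StructuredArrow.homMk x.1 (by simp [x.2]) :
        {ψ : e ⟶ e' // p.map ψ = β} →
          ((StructuredArrow.mk (𝟙 (p.obj e)) : StructuredArrow (p.obj e) p) ⟶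
            StructuredArrow.mk β)) ?_
    intro x y h
    apply Subtype.ext
    exact congrArg CommaMorphism.right h
  exact Finite.of_equiv _ (Equiv.sigmaFiberEquiv (fun ψ : (e ⟶ e') => p.map ψ))

lemma clsFinite_of_fib
    (hfib : ∀ b : B, Finite (IsoCls (StructuredArrow b p)))
    (hset : {b : IsoCls B | Nonempty (StructuredArrow b.out p)}.Finite) :
    Finite (IsoCls E) := by
  haveI := hset.to_subtype
  haveI : ∀ s : {b : IsoCls B | Nonempty (StructuredArrow b.out p)},
      Finite (IsoCls (StructuredArrow s.1.out p)) := fun s => hfib _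
  refine Finite.of_surjective
    (fun z : Σ s : {b : IsoCls B | Nonempty (StructuredArrow b.out p)},
        IsoCls (StructuredArrow s.1.out p) => qmap p _ z.2) ?_
  intro c
  induction c using Quotient.ind with
  | _ e =>
    obtain ⟨i⟩ := Quotient.mk_out (s := isIsomorphicSetoid B) (p.obj e)
    have hmem : (⟦p.obj e⟧ : IsoCls B) ∈
        {b : IsoCls B | Nonempty (StructuredArrow b.out p)} := ⟨StructuredArrow.mk i.hom⟩
    exact ⟨⟨⟨⟦p.obj e⟧, hmem⟩, ⟦StructuredArrow.mk i.hom⟧⟩, rfl⟩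


lemma pcls_mk (e : E) : pcls p ⟦e⟧ = ⟦p.obj e⟧ := Quotient.map_mk _ _ _

lemma pcls_out (c : IsoCls E) : pcls p c = ⟦p.obj c.out⟧ := by
  conv_lhs => rw [← Quotient.out_eq c]
  exact pcls_mk p c.out

theorem finite_iff_fibrewise_finite' (hB : ∀ x y : B, Finite (x ⟶ y)) :
    (FiniteCat E ↔
      ((∀ b : B, FiniteCat (StructuredArrow b p)) ∧
        {b : IsoCls B | Nonempty (StructuredArrow b.out p)}.Finite)) ∧
    (FiniteCat E →
      gcard E =
        ∑ᶠ b : IsoCls B, gcard (StructuredArrow b.out p) / (Nat.card (Aut b.out) : ℚ)) := by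
  constructor
  · constructor
    · rintro ⟨h1, h2⟩
      haveI := h2
      exact ⟨fun b => ⟨fib_homFinite p h1 b, fib_clsFinite p hB b⟩, set_finite_of_clsFinite p⟩
    · rintro ⟨hfib, hset⟩
      exact ⟨homFinite_of_fib p hB (fun b => (hfib b).1),
        clsFinite_of_fib p (fun b => (hfib b).2) hset⟩
  · intro hE
    have hEh : ∀ x y : E, Finite (x ⟶ y) := hE.1
    haveI := hE.2
    haveI : Fintype (IsoCls E) := Fintype.ofFinite _
    have stepB : ∀ b : IsoCls B,
        gcard (StructuredArrow b.out p) / (Nat.card (Aut b.out) : ℚ)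
          = ∑ c ∈ Finset.univ.filter (fun c : IsoCls E => pcls p c = b),
              (Nat.card (Aut c.out) : ℚ)⁻¹ := by
      intro b
      by_cases hne : Nonempty (StructuredArrow b.out p)
      · haveI : Finite (IsoCls (StructuredArrow b.out p)) := fib_clsFinite p hB b.out
        haveI : Fintype (IsoCls (StructuredArrow b.out p)) := Fintype.ofFinite _
        have hA : (Nat.card (Aut b.out) : ℚ) ≠ 0 := by
          haveI : Finite (b.out ⟶ b.out) := hB _ _
          haveI : Finite (Aut b.out) :=
            Finite.of_equiv _ (Groupoid.isoEquivHom b.out b.out).symm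
          exact_mod_cast (Nat.card_pos (α := Aut b.out)).ne'
        have hmaps : ∀ x : IsoCls (StructuredArrow b.out p), x ∈ Finset.univ →
            qmap p b.out x ∈ Finset.univ.filter (fun c : IsoCls E => pcls p c = b) := by
          intro x _
          induction x using Quotient.ind with
          | _ y =>
            simp only [Finset.mem_filter, Finset.mem_univ, true_and, qmap, pcls,
              Set.mem_setOf_eq, Quotient.map_mk]
            exact Finset.mem_filter.2 ⟨Finset.mem_univ _, (Quotient.sound ⟨(asIso y.hom).symm⟩ :
              (⟦p.obj y.right⟧ : IsoCls B) = ⟦b.out⟧).trans b.out_eq⟩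
        have hgr := Finset.sum_fiberwise_of_maps_to hmaps
          (fun x : IsoCls (StructuredArrow b.out p) => (Nat.card (Aut x.out) : ℚ)⁻¹)
        have hinner : ∀ c ∈ Finset.univ.filter (fun c : IsoCls E => pcls p c = b),
            ∑ x ∈ Finset.univ.filter (fun x => qmap p b.out x = c),
              (Nat.card (Aut x.out) : ℚ)⁻¹
            = (Nat.card (Aut b.out) : ℚ) * (Nat.card (Aut c.out) : ℚ)⁻¹ := by
          intro c hc
          simp only [Finset.mem_filter, Finset.mem_univ, true_and] at hc
          have h3 : (⟦p.obj c.out⟧ : IsoCls B) = b := (pcls_out p c).symm.trans hc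
          obtain ⟨i⟩ := Quotient.exact (b.out_eq.trans h3.symm)
          haveI : Finite (c.out ⟶ c.out) := hEh _ _
          have hfil : (Finset.univ.filter (fun x => qmap p b.out x = c))
              = Finset.univ.filter
                  (fun x : IsoCls (StructuredArrow b.out p) => qmap p b.out x = ⟦c.out⟧) := by
            rw [Quotient.out_eq]
          rw [hfil, L2 p hB b.out c.out i.hom, div_eq_mul_inv]
        rw [Finset.sum_congr rfl hinner] at hgr
        rw [div_eq_iff hA]
        calc gcard (StructuredArrow b.out p)
            = ∑ x : IsoCls (StructuredArrow b.out p), (Nat.card (Aut x.out) : ℚ)⁻¹ :=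
              finsum_eq_sum_of_fintype _
          _ = ∑ c ∈ Finset.univ.filter (fun c : IsoCls E => pcls p c = b),
                (Nat.card (Aut b.out) : ℚ) * (Nat.card (Aut c.out) : ℚ)⁻¹ := hgr.symm
          _ = (∑ c ∈ Finset.univ.filter (fun c : IsoCls E => pcls p c = b),
                (Nat.card (Aut c.out) : ℚ)⁻¹) * (Nat.card (Aut b.out) : ℚ) := by
              rw [← Finset.mul_sum, mul_comm]
      · haveI : IsEmpty (StructuredArrow b.out p) := not_nonempty_iff.1 hne
        haveI : IsEmpty (IsoCls (StructuredArrow b.out p)) :=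
          ⟨fun x => Quotient.ind (motive := fun _ => False) (fun y => IsEmpty.false y) x⟩
        have h0 : gcard (StructuredArrow b.out p) = 0 := finsum_of_isEmpty _
        have hfil : Finset.univ.filter (fun c : IsoCls E => pcls p c = b) = ∅ := by
          rw [Finset.filter_eq_empty_iff]
          intro c _ hc
          have h3 : (⟦p.obj c.out⟧ : IsoCls B) = b := (pcls_out p c).symm.trans hc
          obtain ⟨i⟩ := Quotient.exact (b.out_eq.trans h3.symm)
          exact hne ⟨StructuredArrow.mk i.hom⟩
        rw [h0, hfil, zero_div, Finset.sum_empty]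
    have hsupp : Function.support (fun b : IsoCls B =>
        gcard (StructuredArrow b.out p) / (Nat.card (Aut b.out) : ℚ))
        ⊆ ↑(Finset.univ.image (pcls p)) := by
      intro b hb
      rw [Function.mem_support, stepB b] at hb
      obtain ⟨c, hc, _⟩ := Finset.exists_ne_zero_of_sum_ne_zero hb
      simp only [Finset.mem_filter, Finset.mem_univ, true_and] at hc
      exact Finset.mem_coe.2 (Finset.mem_image.2 ⟨c, Finset.mem_univ _, hc⟩)
    rw [show gcard E = ∑ c : IsoCls E, (Nat.card (Aut c.out) : ℚ)⁻¹ from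
      finsum_eq_sum_of_fintype _]
    rw [finsum_eq_finset_sum_of_support_subset _ hsupp]
    rw [Finset.sum_congr rfl (fun b _ => stepB b)]
    exact (Finset.sum_fiberwise_of_maps_to
      (fun c _ => Finset.mem_image_of_mem (pcls p) (Finset.mem_univ c))
      (fun c : IsoCls E => (Nat.card (Aut c.out) : ℚ)⁻¹)).symm

end Main


/-- For `B` locally finite and `p : E ⥤ B`: `E` is finite iff every homotopy fibre
`(b ↓ p)` is finite and only finitely many iso classes of `B` carry a nonempty fibre;
and in that case `|E| = Σ_{[b]} |E_b| / #Aut(b)`. -/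
theorem finite_iff_fibrewise_finite {E B : Type*} [Groupoid E] [Groupoid B]
    (hB : LocallyFiniteCat B) (p : E ⥤ B) :
    (FiniteCat E ↔
      ((∀ b : B, FiniteCat (StructuredArrow b p)) ∧
        {b : IsoCls B | Nonempty (StructuredArrow b.out p)}.Finite)) ∧
    (FiniteCat E →
      gcard E =
        ∑ᶠ b : IsoCls B, gcard (StructuredArrow b.out p) / (Nat.card (Aut b.out) : ℚ)) :=
  finite_iff_fibrewise_finite' p hB
end

section
/- Let B be a locally finite groupoid, let X and Y be finite groupoids, and let F : X ⥤ B and G : Y ⥤ B be functors. Then the comma category Comma(F, G) (whose objects are triples (x, y, φ) with φ : F(x) → G(y) a morphism in B) is a finite groupoid, and its homotopy cardinality is |Comma(F, G)| = Σ_{[b]∈π₀B} |X_b| · |Y_b| / #Aut(b), where X_b = (b ↓ F) and Y_b = (b ↓ G) are the homotopy fibres over b and the sum ranges over the isomorphism classes of objects of B. -/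
open CategoryTheory

namespace HPB

open MulAction

section General
variable {C : Type*} [Category C]

abbrev cls (c : C) : IsoCls C := Quotient.mk (isIsomorphicSetoid C) c

lemma out_cls_iso (c : C) : Nonempty ((cls c).out ≅ c) := Quotient.mk_out (s := isIsomorphicSetoid C) c

lemma cls_out (q : IsoCls C) : cls q.out = q := Quotient.out_eq q

lemma card_aut_congr {a b : C} (e : a ≅ b) : Nat.card (Aut a) = Nat.card (Aut b) :=
  Nat.card_congr e.conjAut.toEquiv

lemma card_hom_congr {a b c d : C} (e : a ≅ b) (e' : c ≅ d) :
    Nat.card (a ⟶ c) = Nat.card (b ⟶ d) :=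
  Nat.card_congr ⟨fun f => e.inv ≫ f ≫ e'.hom, fun f => e.hom ≫ f ≫ e'.inv,
    fun f => by simp, fun f => by simp⟩

end General

section Grpd
variable {D : Type*} [Groupoid D]

lemma card_hom_self (a : D) : Nat.card (a ⟶ a) = Nat.card (Aut a) :=
  (Nat.card_congr (Groupoid.isoEquivHom a a)).symm

lemma hom_isEmpty {a b : D} (h : ¬ Nonempty (a ≅ b)) : IsEmpty (a ⟶ b) :=
  ⟨fun f => h ⟨asIso f⟩⟩

lemma finite_aut (hD : LocallyFiniteCat D) (a : D) : Finite (Aut a) := by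
  have := hD a a
  exact Finite.of_injective _ (Groupoid.isoEquivHom a a).injective

lemma card_aut_pos (hD : LocallyFiniteCat D) (a : D) : 0 < Nat.card (Aut a) := by
  have := finite_aut hD a
  exact Nat.card_pos

end Grpd

section Orbits

lemma nat_card_sigma {ι : Type*} [Fintype ι] (f : ι → Type*) [∀ i, Finite (f i)] :
    (Nat.card (Σ i, f i) : ℚ) = ∑ i, (Nat.card (f i) : ℚ) := by
  letI : ∀ i, Fintype (f i) := fun i => Fintype.ofFinite _
  simp [Nat.card_eq_fintype_card, Fintype.card_sigma]

lemma stab_card (A S : Type*) [Group A] [Finite A] [Finite S] [MulAction A S] (s : S) :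
    (Nat.card (stabilizer A s) : ℚ)⁻¹ = (Nat.card (orbit A s) : ℚ) / (Nat.card A : ℚ) := by
  have h := Nat.card_congr (orbitProdStabilizerEquivGroup A s)
  rw [Nat.card_prod] at h
  have h1 : 0 < Nat.card (stabilizer A s) := Nat.card_pos
  have h2 : 0 < Nat.card (orbit A s) := @Nat.card_pos _ ⟨⟨s, mem_orbit_self s⟩⟩ _
  have h1' : (Nat.card (stabilizer A s) : ℚ) ≠ 0 := by positivity
  have h2' : (Nat.card (orbit A s) : ℚ) ≠ 0 := by positivity
  rw [← h]
  push_cast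
  rw [div_mul_cancel_left₀ h2']

lemma orbit_sum (A S : Type*) [Group A] [Finite A] [Finite S] [MulAction A S]
    [Fintype (Quotient (orbitRel A S))] :
    ∑ o : Quotient (orbitRel A S), ((Nat.card (stabilizer A o.out) : ℚ))⁻¹
      = (Nat.card S : ℚ) / (Nat.card A : ℚ) := by
  have hcard : (Nat.card S : ℚ)
      = ∑ o : Quotient (orbitRel A S), (Nat.card (orbit A o.out) : ℚ) := by
    rw [Nat.card_congr (selfEquivSigmaOrbits A S)]
    exact nat_card_sigma _
  rw [hcard, Finset.sum_div]
  exact Finset.sum_congr rfl fun o _ => stab_card A S o.out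

end Orbits

section Comma
variable {X Y B : Type*} [Groupoid X] [Groupoid Y] [Groupoid B]

/-- The action of `Aut x × Aut y` on `Hom(F x, G y)`. -/
def cAct (F : X ⥤ B) (G : Y ⥤ B) (x : X) (y : Y) :
    MulAction (Aut x × Aut y) (F.obj x ⟶ G.obj y) where
  smul a φ := F.map a.1.inv ≫ φ ≫ G.map a.2.hom
  one_smul φ := by
    show F.map (Iso.refl x).inv ≫ φ ≫ G.map (Iso.refl y).hom = φ
    simp
  mul_smul a b φ := by
    show F.map (b.1 ≪≫ a.1).inv ≫ φ ≫ G.map (b.2 ≪≫ a.2).hom =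
      F.map a.1.inv ≫ (F.map b.1.inv ≫ φ ≫ G.map b.2.hom) ≫ G.map a.2.hom
    simp [Aut]

theorem gcard_comma (hB : LocallyFiniteCat B) (hX : FiniteCat X) (hY : FiniteCat Y)
    (F : X ⥤ B) (G : Y ⥤ B) :
    FiniteCat (Comma F G) ∧
      gcard (Comma F G) = ∑ᶠ p : IsoCls X × IsoCls Y,
        (Nat.card (F.obj p.1.out ⟶ G.obj p.2.out) : ℚ) /
          ((Nat.card (Aut p.1.out) : ℚ) * (Nat.card (Aut p.2.out) : ℚ)) := by
  have hXh := hX.1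
  have hYh := hY.1
  haveI hX2 := hX.2
  haveI hY2 := hY.2
  -- the class map
  let q : IsoCls (Comma F G) → IsoCls X × IsoCls Y :=
    Quotient.lift (fun c => (cls c.left, cls c.right))
      (fun c d h => by
        obtain ⟨e⟩ := h
        exact Prod.ext (Quotient.sound ⟨(Comma.fst F G).mapIso e⟩)
          (Quotient.sound ⟨(Comma.snd F G).mapIso e⟩))
  -- essential surjectivity data
  have key : ∀ (d : Comma F G) (x : X) (y : Y), Nonempty (x ≅ d.left) → Nonempty (y ≅ d.right) →
      ∃ φ : F.obj x ⟶ G.obj y, Nonempty ((⟨x, y, φ⟩ : Comma F G) ≅ d) := by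
    rintro d x y ⟨i⟩ ⟨j⟩
    exact ⟨F.map i.hom ≫ d.hom ≫ G.map j.inv, ⟨Comma.isoMk i j (by simp)⟩⟩
  -- hom finiteness
  haveI homfin : ∀ a b : Comma F G, Finite (a ⟶ b) := by
    intro a b
    haveI := hXh a.left b.left
    haveI := hYh a.right b.right
    exact Finite.of_injective (fun f : a ⟶ b => (f.left, f.right))
      (fun f g h => by
        apply CommaMorphism.ext
        · exact congrArg Prod.fst h
        · exact congrArg Prod.snd h)
  -- finiteness of iso classes
  haveI clsfin : Finite (IsoCls (Comma F G)) := by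
    haveI : ∀ p : IsoCls X × IsoCls Y, Finite (F.obj p.1.out ⟶ G.obj p.2.out) :=
      fun p => hB _ _
    apply Finite.of_surjective
      (fun z : Σ p : IsoCls X × IsoCls Y, (F.obj p.1.out ⟶ G.obj p.2.out) =>
        cls (⟨z.1.1.out, z.1.2.out, z.2⟩ : Comma F G))
    intro c
    obtain ⟨d, rfl⟩ := Quotient.exists_rep c
    obtain ⟨φ, hφ⟩ := key d (cls d.left).out (cls d.right).out (out_cls_iso _) (out_cls_iso _)
    exact ⟨⟨(cls d.left, cls d.right), φ⟩, Quotient.sound hφ⟩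
  refine ⟨⟨homfin, clsfin⟩, ?_⟩
  -- the computation
  letI : Fintype (IsoCls (Comma F G)) := Fintype.ofFinite _
  letI : Fintype (IsoCls X × IsoCls Y) := Fintype.ofFinite _
  letI : DecidableEq (IsoCls X × IsoCls Y) := Classical.decEq _
  rw [gcard, finsum_eq_sum_of_fintype, finsum_eq_sum_of_fintype,
    ← Fintype.sum_fiberwise q (fun c : IsoCls (Comma F G) => (Nat.card (Aut c.out) : ℚ)⁻¹)]
  apply Finset.sum_congr rfl
  intro p _
  set x := p.1.out with hx
  set y := p.2.out with hy
  letI := cAct F G x y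
  haveI : Finite (F.obj x ⟶ G.obj y) := hB _ _
  haveI : Finite (Aut x) := finite_aut hXh x
  haveI : Finite (Aut y) := finite_aut hYh y
  -- smul/iso dictionary
  have iso_of_smul : ∀ (φ : F.obj x ⟶ G.obj y) (a : Aut x × Aut y),
      Nonempty ((⟨x, y, φ⟩ : Comma F G) ≅ ⟨x, y, a • φ⟩) := by
    intro φ a
    refine ⟨Comma.isoMk a.1 a.2 ?_⟩
    show F.map a.1.hom ≫ (F.map a.1.inv ≫ φ ≫ G.map a.2.hom) = φ ≫ G.map a.2.hom
    simp [Aut]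
  have smul_of_iso : ∀ (φ φ' : F.obj x ⟶ G.obj y),
      ((⟨x, y, φ⟩ : Comma F G) ≅ ⟨x, y, φ'⟩) → ∃ a : Aut x × Aut y, a • φ = φ' := by
    intro φ φ' e
    refine ⟨(asIso e.hom.left, asIso e.hom.right), ?_⟩
    show F.map (inv e.hom.left) ≫ φ ≫ G.map e.hom.right = φ'
    rw [← e.hom.w]
    simp
  -- the bijection between orbits and the fibre of q
  have hq : ∀ φ : F.obj x ⟶ G.obj y, q (cls (⟨x, y, φ⟩ : Comma F G)) = p :=
    fun φ => Prod.ext (cls_out p.1) (cls_out p.2)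
  let Φ : Quotient (orbitRel (Aut x × Aut y) (F.obj x ⟶ G.obj y)) →
      {c : IsoCls (Comma F G) // q c = p} :=
    Quotient.lift (fun φ => ⟨cls (⟨x, y, φ⟩ : Comma F G), hq φ⟩)
      (fun φ φ' h => by
        obtain ⟨a, ha⟩ := h
        exact Subtype.ext (Quotient.sound
          (by rw [← ha]; exact Nonempty.map Iso.symm (iso_of_smul φ' a))))
  have hΦbij : Function.Bijective Φ := by
    constructor
    · intro o1 o2
      induction o1 using Quotient.inductionOn with | h φ =>
      induction o2 using Quotient.inductionOn with | h φ' =>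
      intro h
      have h2 : Nonempty ((⟨x, y, φ⟩ : Comma F G) ≅ ⟨x, y, φ'⟩) :=
        Quotient.exact (congrArg Subtype.val h)
      obtain ⟨e⟩ := h2
      obtain ⟨a, ha⟩ := smul_of_iso φ φ' e
      have hrel : φ' ∈ orbit (Aut x × Aut y) φ := MulAction.mem_orbit_iff.mpr ⟨a, ha⟩
      exact (Quotient.sound hrel).symm
    · rintro ⟨c, hc⟩
      obtain ⟨d, rfl⟩ := Quotient.exists_rep c
      have hc1 : cls d.left = p.1 := congrArg Prod.fst hc
      have hc2 : cls d.right = p.2 := congrArg Prod.snd hc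
      have hx1 : Nonempty (x ≅ d.left) := by rw [hx, ← hc1]; exact out_cls_iso d.left
      have hy1 : Nonempty (y ≅ d.right) := by rw [hy, ← hc2]; exact out_cls_iso d.right
      obtain ⟨φ, hφ⟩ := key d x y hx1 hy1
      exact ⟨Quotient.mk _ φ, Subtype.ext (Quotient.sound hφ)⟩
  -- automorphisms vs stabilizers
  have stab_w : ∀ (ψ : F.obj x ⟶ G.obj y) (a : Aut x × Aut y), a • ψ = ψ →
      F.map a.1.hom ≫ ψ = ψ ≫ G.map a.2.hom := by
    intro ψ a ha
    nth_rewrite 1 [← ha]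
    show F.map a.1.hom ≫ F.map a.1.inv ≫ ψ ≫ G.map a.2.hom = ψ ≫ G.map a.2.hom
    simp [Aut]
  have autstab : ∀ ψ : F.obj x ⟶ G.obj y,
      Nat.card (Aut (⟨x, y, ψ⟩ : Comma F G)) = Nat.card (stabilizer (Aut x × Aut y) ψ) := by
    intro ψ
    refine Nat.card_congr ⟨fun α => ⟨(asIso α.hom.left, asIso α.hom.right), ?_⟩,
      fun a => Comma.isoMk a.1.1 a.1.2 (stab_w ψ a.1 a.2), ?_, ?_⟩
    · show F.map (inv α.hom.left) ≫ ψ ≫ G.map α.hom.right = ψ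
      rw [← α.hom.w]
      simp
    · intro α
      apply Iso.ext
      apply CommaMorphism.ext <;> simp
    · intro a
      apply Subtype.ext
      apply Prod.ext <;> (apply Iso.ext; simp [Aut])
  -- count the fibre
  letI : Fintype (Quotient (orbitRel (Aut x × Aut y) (F.obj x ⟶ G.obj y))) := Fintype.ofFinite _
  rw [← Fintype.sum_bijective Φ hΦbij _ _ (fun o => ?_)]
  · rw [orbit_sum, Nat.card_prod]
    push_cast
    ring
  · -- weights agree
    show (Nat.card (stabilizer (Aut x × Aut y) o.out) : ℚ)⁻¹ = (Nat.card (Aut (Φ o).1.out) : ℚ)⁻¹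
    congr 2
    have h1 : Φ o = Φ (Quotient.mk _ o.out) := by rw [Quotient.out_eq]
    have h2 : (Φ (Quotient.mk _ o.out)).1 = cls (⟨x, y, o.out⟩ : Comma F G) := rfl
    rw [h1, h2]
    obtain ⟨e⟩ := out_cls_iso (⟨x, y, o.out⟩ : Comma F G)
    rw [card_aut_congr e]
    exact (autstab o.out).symm

end Comma

section SA
variable {X B : Type*} [Groupoid X] [Groupoid B]

/-- The action of `Aut x` on `Hom(b, F x)`. -/
def saAct (F : X ⥤ B) (b : B) (x : X) : MulAction (Aut x) (b ⟶ F.obj x) where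
  smul a ψ := ψ ≫ F.map a.hom
  one_smul ψ := by
    show ψ ≫ F.map (Iso.refl x).hom = ψ
    simp
  mul_smul a c ψ := by
    show ψ ≫ F.map (c ≪≫ a).hom = (ψ ≫ F.map c.hom) ≫ F.map a.hom
    rw [Category.assoc, ← Functor.map_comp]; rfl

theorem gcard_SA (hB : LocallyFiniteCat B) (hX : FiniteCat X) (F : X ⥤ B) (b : B) :
    FiniteCat (StructuredArrow b F) ∧
      gcard (StructuredArrow b F) = ∑ᶠ x : IsoCls X,
        (Nat.card (b ⟶ F.obj x.out) : ℚ) / (Nat.card (Aut x.out) : ℚ) := by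
  have hXh := hX.1
  haveI hX2 := hX.2
  let q : IsoCls (StructuredArrow b F) → IsoCls X :=
    Quotient.lift (fun c => cls c.right)
      (fun c d h => by
        obtain ⟨e⟩ := h
        exact Quotient.sound ⟨(StructuredArrow.proj b F).mapIso e⟩)
  have key : ∀ (d : StructuredArrow b F) (x : X), Nonempty (x ≅ d.right) →
      ∃ ψ : b ⟶ F.obj x, Nonempty (StructuredArrow.mk ψ ≅ d) := by
    rintro d x ⟨j⟩
    exact ⟨d.hom ≫ F.map j.inv, ⟨StructuredArrow.isoMk j (by simp)⟩⟩
  haveI homfin : ∀ a c : StructuredArrow b F, Finite (a ⟶ c) := by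
    intro a c
    haveI := hXh a.right c.right
    exact Finite.of_injective (fun f : a ⟶ c => f.right)
      (fun f g h => by apply StructuredArrow.hom_ext; exact h)
  haveI clsfin : Finite (IsoCls (StructuredArrow b F)) := by
    haveI : ∀ x : IsoCls X, Finite (b ⟶ F.obj x.out) := fun x => hB _ _
    apply Finite.of_surjective
      (fun z : Σ x : IsoCls X, (b ⟶ F.obj x.out) => cls (StructuredArrow.mk z.2))
    intro c
    obtain ⟨d, rfl⟩ := Quotient.exists_rep c
    obtain ⟨ψ, hψ⟩ := key d (cls d.right).out (out_cls_iso _)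
    exact ⟨⟨cls d.right, ψ⟩, Quotient.sound hψ⟩
  refine ⟨⟨homfin, clsfin⟩, ?_⟩
  letI : Fintype (IsoCls (StructuredArrow b F)) := Fintype.ofFinite _
  letI : Fintype (IsoCls X) := Fintype.ofFinite _
  letI : DecidableEq (IsoCls X) := Classical.decEq _
  rw [gcard, finsum_eq_sum_of_fintype, finsum_eq_sum_of_fintype,
    ← Fintype.sum_fiberwise q
      (fun c : IsoCls (StructuredArrow b F) => (Nat.card (Aut c.out) : ℚ)⁻¹)]
  apply Finset.sum_congr rfl
  intro p _
  set x := p.out with hx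
  letI := saAct F b x
  haveI : Finite (b ⟶ F.obj x) := hB _ _
  haveI : Finite (Aut x) := finite_aut hXh x
  have iso_of_smul : ∀ (ψ : b ⟶ F.obj x) (a : Aut x),
      Nonempty (StructuredArrow.mk (T := F) ψ ≅ StructuredArrow.mk (a • ψ)) := by
    intro ψ a
    exact ⟨StructuredArrow.isoMk a rfl⟩
  have smul_of_iso : ∀ (ψ ψ' : b ⟶ F.obj x),
      (StructuredArrow.mk (T := F) ψ ≅ StructuredArrow.mk ψ') → ∃ a : Aut x, a • ψ = ψ' := by
    intro ψ ψ' e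
    refine ⟨asIso e.hom.right, ?_⟩
    show ψ ≫ F.map e.hom.right = ψ'
    exact StructuredArrow.w e.hom
  have hq : ∀ ψ : b ⟶ F.obj x, q (cls (StructuredArrow.mk ψ)) = p := fun ψ => cls_out p
  let Φ : Quotient (orbitRel (Aut x) (b ⟶ F.obj x)) →
      {c : IsoCls (StructuredArrow b F) // q c = p} :=
    Quotient.lift (fun ψ => ⟨cls (StructuredArrow.mk ψ), hq ψ⟩)
      (fun ψ ψ' h => by
        obtain ⟨a, ha⟩ := h
        exact Subtype.ext (Quotient.sound
          (by rw [← ha]; exact Nonempty.map Iso.symm (iso_of_smul ψ' a))))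
  have hΦbij : Function.Bijective Φ := by
    constructor
    · intro o1 o2
      induction o1 using Quotient.inductionOn with | h ψ =>
      induction o2 using Quotient.inductionOn with | h ψ' =>
      intro h
      have h2 : Nonempty (StructuredArrow.mk (T := F) ψ ≅ StructuredArrow.mk ψ') :=
        Quotient.exact (congrArg Subtype.val h)
      obtain ⟨e⟩ := h2
      obtain ⟨a, ha⟩ := smul_of_iso ψ ψ' e
      have hrel : ψ' ∈ orbit (Aut x) ψ := MulAction.mem_orbit_iff.mpr ⟨a, ha⟩
      exact (Quotient.sound hrel).symm
    · rintro ⟨c, hc⟩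
      obtain ⟨d, rfl⟩ := Quotient.exists_rep c
      have hx1 : Nonempty (x ≅ d.right) := by rw [hx, ← hc]; exact out_cls_iso d.right
      obtain ⟨ψ, hψ⟩ := key d x hx1
      exact ⟨Quotient.mk _ ψ, Subtype.ext (Quotient.sound hψ)⟩
  have autstab : ∀ ψ : b ⟶ F.obj x,
      Nat.card (Aut (StructuredArrow.mk (T := F) ψ)) = Nat.card (stabilizer (Aut x) ψ) := by
    intro ψ
    refine Nat.card_congr ⟨fun α => ⟨asIso α.hom.right, ?_⟩,
      fun a => StructuredArrow.isoMk a.1 a.2, ?_, ?_⟩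
    · show ψ ≫ F.map α.hom.right = ψ
      exact StructuredArrow.w α.hom
    · intro α
      apply Iso.ext
      apply StructuredArrow.hom_ext
      simp [StructuredArrow.isoMk]
    · intro a
      apply Subtype.ext
      apply Iso.ext
      simp [StructuredArrow.isoMk, Aut]
  letI : Fintype (Quotient (orbitRel (Aut x) (b ⟶ F.obj x))) := Fintype.ofFinite _
  rw [← Fintype.sum_bijective Φ hΦbij _ _ (fun o => ?_)]
  · rw [orbit_sum]
  · show (Nat.card (stabilizer (Aut x) o.out) : ℚ)⁻¹ = (Nat.card (Aut (Φ o).1.out) : ℚ)⁻¹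
    congr 2
    have h1 : Φ o = Φ (Quotient.mk _ o.out) := by rw [Quotient.out_eq]
    have h2 : (Φ (Quotient.mk _ o.out)).1 = cls (StructuredArrow.mk (T := F) o.out) := rfl
    rw [h1, h2]
    obtain ⟨e⟩ := out_cls_iso (StructuredArrow.mk (T := F) o.out)
    rw [card_aut_congr e]
    exact (autstab o.out).symm

end SA

section Scan
variable {B : Type*} [Groupoid B]

lemma scan (hB : LocallyFiniteCat B) (b₁ b₂ : B) (r s : ℚ) :
    ∑ᶠ c : IsoCls B, (Nat.card (c.out ⟶ b₁) : ℚ) / r * ((Nat.card (c.out ⟶ b₂) : ℚ) / s) /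
        (Nat.card (Aut c.out) : ℚ)
      = (Nat.card (b₁ ⟶ b₂) : ℚ) / (r * s) := by
  rw [finsum_eq_single _ (cls b₁) ?_]
  · obtain ⟨e⟩ := out_cls_iso b₁
    have h1 : Nat.card ((cls b₁).out ⟶ b₁) = Nat.card (Aut ((cls b₁).out)) := by
      rw [card_hom_congr (Iso.refl _) e.symm]
      exact card_hom_self _
    have h2 : Nat.card ((cls b₁).out ⟶ b₂) = Nat.card (b₁ ⟶ b₂) := card_hom_congr e (Iso.refl _)
    rw [h1, h2]
    have hpos : (0:ℚ) < (Nat.card (Aut ((cls b₁).out)) : ℚ) := by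
      exact_mod_cast card_aut_pos hB _
    have hA : (Nat.card (Aut ((cls b₁).out)) : ℚ) ≠ 0 := ne_of_gt hpos
    rw [div_mul_div_comm, div_div, mul_comm (r * s), mul_div_mul_left _ _ hA]
  · intro c hc
    have he : IsEmpty (c.out ⟶ b₁) := by
      apply hom_isEmpty
      rintro ⟨e⟩
      exact hc (by rw [← cls_out c]; exact Quotient.sound ⟨e⟩)
    rw [Nat.card_of_isEmpty]
    simp

end Scan
end HPB

/-- Cardinality of homotopy pullbacks -/
theorem comma_finite_card {X Y B : Type*} [Groupoid X] [Groupoid Y] [Groupoid B]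
    (hB : LocallyFiniteCat B) (hX : FiniteCat X) (hY : FiniteCat Y)
    (F : X ⥤ B) (G : Y ⥤ B) :
    (∀ (a b : Comma F G) (f : a ⟶ b), IsIso f) ∧
    FiniteCat (Comma F G) ∧
    gcard (Comma F G) =
      ∑ᶠ b : IsoCls B,
        gcard (StructuredArrow b.out F) * gcard (StructuredArrow b.out G) /
          (Nat.card (Aut b.out) : ℚ) := by
  obtain ⟨hfin, hformula⟩ := HPB.gcard_comma hB hX hY F G
  refine ⟨?_, hfin, ?_⟩
  · intro a b f
    refine ⟨⟨(Comma.isoMk (asIso f.left) (asIso f.right) f.w).inv, ?_, ?_⟩⟩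
    · apply CommaMorphism.ext <;> simp [Comma.isoMk]
    · apply CommaMorphism.ext <;> simp [Comma.isoMk]
  · rw [hformula]
    letI : Fintype (IsoCls X) := @Fintype.ofFinite _ hX.2
    letI : Fintype (IsoCls Y) := @Fintype.ofFinite _ hY.2
    have hSA : ∀ c : IsoCls B,
        gcard (StructuredArrow c.out F) * gcard (StructuredArrow c.out G) /
            (Nat.card (Aut c.out) : ℚ)
          = ∑ x : IsoCls X, ∑ y : IsoCls Y,
              (Nat.card (c.out ⟶ F.obj x.out) : ℚ) / (Nat.card (Aut x.out) : ℚ) *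
                ((Nat.card (c.out ⟶ G.obj y.out) : ℚ) / (Nat.card (Aut y.out) : ℚ)) /
                (Nat.card (Aut c.out) : ℚ) := by
      intro c
      rw [(HPB.gcard_SA hB hX F c.out).2, (HPB.gcard_SA hB hY G c.out).2,
        finsum_eq_sum_of_fintype, finsum_eq_sum_of_fintype, Finset.sum_mul_sum,
        Finset.sum_div]
      exact Finset.sum_congr rfl fun x _ => Finset.sum_div _ _ _
    have hsupp : ∀ (D : Type _) [Groupoid D] (H : D ⥤ B) (z : D) (f : IsoCls B → ℚ)
        (hf : ∀ c : IsoCls B, c ≠ HPB.cls (H.obj z) → f c = 0),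
        (Function.support f).Finite := by
      intro D _ H z f hf
      apply Set.Finite.subset (Set.finite_singleton (HPB.cls (H.obj z)))
      intro c hc
      by_contra h
      exact hc (hf c h)
    have hzero : ∀ (x : IsoCls X) (c : IsoCls B), c ≠ HPB.cls (F.obj x.out) →
        (Nat.card (c.out ⟶ F.obj x.out) : ℚ) = 0 := by
      intro x c hc
      have he : IsEmpty (c.out ⟶ F.obj x.out) := by
        apply HPB.hom_isEmpty
        rintro ⟨e⟩
        exact hc (by rw [← HPB.cls_out c]; exact Quotient.sound ⟨e⟩)
      rw [Nat.card_of_isEmpty]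
      norm_num
    rw [finsum_congr hSA]
    rw [finsum_sum_comm _ _ (fun x _ => hsupp X F x.out _ (fun c hc => by
      rw [Finset.sum_eq_zero]
      intro y _
      rw [hzero x c hc]
      simp))]
    rw [finsum_eq_sum_of_fintype, Fintype.sum_prod_type]
    apply Finset.sum_congr rfl
    intro x _
    rw [finsum_sum_comm _ _ (fun y _ => hsupp X F x.out _ (fun c hc => by
      rw [hzero x c hc]
      simp))]
    apply Finset.sum_congr rfl
    intro y _
    exact (HPB.scan hB _ _ _ _).symm
end

section
/- Let p : E ⥤ B be a functor of groupoids with B locally finite. (1) If every homotopy fibre (b ↓ p) is a finite groupoid, then E is locally finite. (2) If E is a finite groupoid, then every homotopy fibre (b ↓ p) is a finite groupoid. -/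
open CategoryTheory

/-- For `p : E ⥤ B` with `B` locally finite: (1) if every homotopy fibre `(b ↓ p)` is
finite then `E` is locally finite; (2) if `E` is finite then every homotopy fibre is
finite. -/
theorem finite_fibres_locally_finite {E B : Type*} [Groupoid E] [Groupoid B]
    (hB : LocallyFiniteCat B) (p : E ⥤ B) :
    ((∀ b : B, FiniteCat (StructuredArrow b p)) → LocallyFiniteCat E) ∧
    (FiniteCat E → ∀ b : B, FiniteCat (StructuredArrow b p)) := by
  constructor
  · intro hb x y
    haveI : Finite (p.obj x ⟶ p.obj y) := hB _ _
    haveI : ∀ ψ : p.obj x ⟶ p.obj y,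
        Finite ((StructuredArrow.mk (𝟙 (p.obj x)) : StructuredArrow (p.obj x) p) ⟶
          StructuredArrow.mk ψ) := fun ψ => (hb (p.obj x)).1 _ _
    haveI : ∀ ψ : p.obj x ⟶ p.obj y, Finite {f : x ⟶ y // p.map f = ψ} := by
      intro ψ
      refine Finite.of_injective
        (fun f : {f : x ⟶ y // p.map f = ψ} =>
          (StructuredArrow.homMk f.1 (by simp [f.2]) :
            (StructuredArrow.mk (𝟙 (p.obj x)) : StructuredArrow (p.obj x) p) ⟶
              StructuredArrow.mk ψ)) ?_
      intro a c h
      exact Subtype.ext (congrArg CommaMorphism.right h)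
    exact Finite.of_equiv _ (Equiv.sigmaFiberEquiv (fun f : x ⟶ y => p.map f)).symm.symm
  · intro hE b
    constructor
    · intro X Y
      haveI : Finite (X.right ⟶ Y.right) := hE.1 _ _
      exact Finite.of_injective (fun g : X ⟶ Y => g.right)
        (fun g g' h => by ext; exact h)
    · haveI : Finite (IsoCls E) := hE.2
      haveI : ∀ c : IsoCls E, Finite (b ⟶ p.obj c.out) := fun c => hB _ _
      refine Finite.of_surjective
        (fun s : Σ c : IsoCls E, (b ⟶ p.obj c.out) =>
          (Quotient.mk _ (StructuredArrow.mk s.2) : IsoCls (StructuredArrow b p))) ?_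
      intro q
      obtain ⟨X, rfl⟩ := Quotient.exists_rep q
      obtain ⟨ι⟩ := Quotient.mk_out (s := isIsomorphicSetoid E) X.right
      refine ⟨⟨Quotient.mk _ X.right, X.hom ≫ p.map ι.inv⟩, Quotient.sound ?_⟩
      exact ⟨StructuredArrow.isoMk ι (by simp [← p.map_comp])⟩
end

section
/- Let X and Y be finite groupoids. Then the functor category X ⥤ Y (whose morphisms are natural transformations, all of which are automatically isomorphisms since Y is a groupoid) is again a finite groupoid: there are only finitely many functors X ⥤ Y up to natural isomorphism, and for any two functors F, G : X ⥤ Y the set of natural transformations F → G is finite. -/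
open CategoryTheory

section Aux

variable {C : Type*} [Category C] {D : Type*} [Category D]

/-- A chosen isomorphism from the canonical representative of the isomorphism class of `x`
to `x` itself. -/
noncomputable def repIso (x : C) :
    ((Quotient.mk (CategoryTheory.isIsomorphicSetoid C) x).out : C) ≅ x :=
  Nonempty.some (Quotient.mk_out (s := CategoryTheory.isIsomorphicSetoid C) x)

/-- Natural transformations between two functors form a finite type, provided the source has
finitely many isomorphism classes and the target has finite hom-sets. -/
lemma finite_natTrans (hC : Finite (IsoCls C)) (hD : ∀ y z : D, Finite (y ⟶ z))
    (F G : C ⥤ D) : Finite (F ⟶ G) := by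
  haveI : ∀ y z : D, Finite (y ⟶ z) := hD
  haveI : Finite (IsoCls C) := hC
  refine Finite.of_injective
    (fun α => fun q : IsoCls C => α.app q.out) ?_
  intro α β h
  ext x
  have key : ∀ γ : F ⟶ G, γ.app x =
      F.map (repIso x).inv ≫ γ.app (Quotient.mk (CategoryTheory.isIsomorphicSetoid C) x).out
        ≫ G.map (repIso x).hom := by
    intro γ
    rw [← Category.assoc, γ.naturality, Category.assoc, ← G.map_comp, Iso.inv_hom_id,
      G.map_id, Category.comp_id]
  have h' := congrFun h (Quotient.mk (CategoryTheory.isIsomorphicSetoid C) x)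
  dsimp only at h'
  rw [key α, key β, h']

/-- Finiteness of isomorphism classes transfers along an equivalence of categories. -/
lemma finite_isoCls_of_equivalence (e : C ≌ D) (h : Finite (IsoCls C)) :
    Finite (IsoCls D) := by
  haveI : Finite (IsoCls C) := h
  refine Finite.of_surjective
    (fun q : IsoCls C => Quotient.liftOn q
      (fun c => Quotient.mk (CategoryTheory.isIsomorphicSetoid D) (e.functor.obj c))
      (fun a b hab => Quotient.sound ⟨e.functor.mapIso hab.some⟩)) ?_
  intro q
  induction q using Quotient.ind with
  | _ d =>
    exact ⟨Quotient.mk _ (e.inverse.obj d), Quotient.sound ⟨e.counitIso.app d⟩⟩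

/-- The normalization of a functor: replace each value by the canonical representative of its
isomorphism class. -/
noncomputable def normFunctor (F : C ⥤ D) : C ⥤ D where
  obj c := (Quotient.mk (CategoryTheory.isIsomorphicSetoid D) (F.obj c)).out
  map {a b} f := (repIso (F.obj a)).hom ≫ F.map f ≫ (repIso (F.obj b)).inv
  map_id a := by simp
  map_comp f g := by simp

/-- The normalization of a functor is naturally isomorphic to it. -/
noncomputable def normFunctorIso (F : C ⥤ D) : normFunctor F ≅ F :=
  NatIso.ofComponents (fun c => repIso (F.obj c))
    (by intro a b f; simp [normFunctor])

/-- If the source is a finite type with finite hom-sets and the target has finite hom-sets and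
finitely many isomorphism classes, then the functor category has finitely many isomorphism
classes. -/
lemma finite_isoCls_functor (hCfin : Finite C) (hChom : ∀ a b : C, Finite (a ⟶ b))
    (hDhom : ∀ y z : D, Finite (y ⟶ z)) (hDcls : Finite (IsoCls D)) :
    Finite (IsoCls (C ⥤ D)) := by
  haveI : Finite C := hCfin
  haveI : ∀ a b : C, Finite (a ⟶ b) := hChom
  haveI : ∀ y z : D, Finite (y ⟶ z) := hDhom
  haveI : Finite (IsoCls D) := hDcls
  set R : Set D := Set.range (Quotient.out : IsoCls D → D) with hR
  haveI : Finite R := Set.finite_range _ |>.to_subtype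
  -- For each object function `o`, the functors whose object part is exactly `o` form a finite
  -- type.
  let Fib : (C → R) → Type _ := fun o => {F : C ⥤ D // F.obj = fun c => ((o c : D))}
  haveI hFib : ∀ o : C → R, Finite (Fib o) := by
    intro o
    refine Finite.of_injective
      (fun F => (fun a b (f : a ⟶ b) =>
        eqToHom (congrFun F.2 a).symm ≫ F.1.map f ≫ eqToHom (congrFun F.2 b) :
          ∀ a b : C, (a ⟶ b) → ((o a : D) ⟶ (o b : D)))) ?_
    intro F G h
    apply Subtype.ext
    refine CategoryTheory.Functor.ext (fun c => (congrFun F.2 c).trans (congrFun G.2 c).symm) ?_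
    intro a b f
    have h' := congrFun (congrFun (congrFun h a) b) f
    have := congrArg (fun g => eqToHom (congrFun F.2 a) ≫ g ≫ eqToHom (congrFun F.2 b).symm) h'
    simp only [eqToHom_trans_assoc, eqToHom_refl, Category.id_comp, Category.assoc,
      eqToHom_trans, Category.comp_id] at this
    rw [this]
  -- The total space is finite.
  haveI : Finite (Σ o : C → R, Fib o) := by infer_instance
  -- It surjects onto the isomorphism classes of functors.
  refine Finite.of_surjective
    (fun p : Σ o : C → R, Fib o =>
      Quotient.mk (CategoryTheory.isIsomorphicSetoid (C ⥤ D)) p.2.1) ?_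
  intro q
  induction q using Quotient.ind with
  | _ F =>
    refine ⟨⟨fun c => ⟨(normFunctor F).obj c, ⟨_, rfl⟩⟩, normFunctor F, rfl⟩, ?_⟩
    exact Quotient.sound ⟨normFunctorIso F⟩

end Aux

/-- For finite groupoids `X` and `Y`, the functor category `X ⥤ Y` is again a finite
groupoid: all natural transformations are isomorphisms, there are finitely many
functors up to natural isomorphism, and each set of natural transformations is
finite. -/
theorem functor_category_finite {X Y : Type*} [Groupoid X] [Groupoid Y]
    (hX : FiniteCat X) (hY : FiniteCat Y) :
    (∀ (F G : X ⥤ Y) (α : F ⟶ G), IsIso α) ∧ FiniteCat (X ⥤ Y) := by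
  obtain ⟨hXhom, hXcls⟩ := hX
  obtain ⟨hYhom, hYcls⟩ := hY
  refine ⟨fun F G α => ?_, fun F G => finite_natTrans hXcls hYhom F G, ?_⟩
  · exact NatIso.isIso_of_isIso_app α
  · -- pass to the skeleton of `X`
    haveI : Finite (IsoCls X) := hXcls
    have hskel : Finite (Skeleton X) := by
      dsimp [Skeleton, InducedCategory]
      infer_instance
    have hskelHom : ∀ a b : Skeleton X, Finite (a ⟶ b) := fun a b =>
      Finite.of_equiv _ (InducedCategory.homEquiv (X := a) (Y := b)).symm
    have : Finite (IsoCls (Skeleton X ⥤ Y)) :=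
      finite_isoCls_functor hskel hskelHom hYhom hYcls
    exact finite_isoCls_of_equivalence
      ((skeletonEquivalence X).congrLeft) this
end

section
/- Let S and T be locally finite groupoids, M a groupoid, and P : M ⥤ S, Q : M ⥤ T functors such that every homotopy fibre (s ↓ P) of P is a finite groupoid. Then for every object s of S: each double homotopy fibre M_{(s,t)}, i.e. the homotopy fibre of the functor (P,Q) : M ⥤ S × T over the object (s,t), is a finite groupoid, and M_{(s,t)} is nonempty for only finitely many isomorphism classes [t] of objects of T. -/
open CategoryTheory

attribute [local instance] CategoryTheory.isIsomorphicSetoid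

section Aux

variable {S T M : Type*} [Groupoid S] [Groupoid T] [Groupoid M]

/-- If the base is locally finite and all homotopy fibres have finite hom-sets,
then the total groupoid is locally finite. -/
lemma locallyFinite_of_fibres (hS : LocallyFiniteCat S) (P : M ⥤ S)
    (hP : ∀ s : S, FiniteCat (StructuredArrow s P)) : LocallyFiniteCat M := by
  intro m m'
  haveI : ∀ φ : P.obj m ⟶ P.obj m',
      Finite {g : m ⟶ m' // P.map g = φ} := by
    intro φ
    haveI := (hP (P.obj m)).1 (StructuredArrow.mk (𝟙 (P.obj m))) (StructuredArrow.mk φ)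
    refine Finite.of_injective
      (fun u => (StructuredArrow.homMk u.1
          ((Category.id_comp (P.map u.1)).trans u.2) :
        StructuredArrow.mk (𝟙 (P.obj m)) ⟶ StructuredArrow.mk φ)) ?_
    intro u v h
    exact Subtype.ext (congrArg CommaMorphism.right h)
  haveI := hS (P.obj m) (P.obj m')
  exact Finite.of_equiv _ (Equiv.sigmaFiberEquiv fun g : m ⟶ m' => P.map g)

end Aux

/-- For a finite-type span of groupoids `S ⟵ M ⟶ T` (every homotopy fibre of
`P : M ⥤ S` finite) with `S`, `T` locally finite: for every `s`, all double homotopy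
fibres `M_{(s,t)}` are finite, and they are nonempty for only finitely many
isomorphism classes `[t]` of `T`. -/
theorem double_fibres_column_finite {S T M : Type*} [Groupoid S] [Groupoid T] [Groupoid M]
    (hS : LocallyFiniteCat S) (hT : LocallyFiniteCat T)
    (P : M ⥤ S) (Q : M ⥤ T)
    (hP : ∀ s : S, FiniteCat (StructuredArrow s P)) (s : S) :
    (∀ t : T, FiniteCat (StructuredArrow (s, t) (P.prod' Q))) ∧
    {t : IsoCls T | Nonempty (StructuredArrow (s, t.out) (P.prod' Q))}.Finite := by
  have hM : LocallyFiniteCat M := locallyFinite_of_fibres hS P hP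
  constructor
  · intro t
    constructor
    · -- hom-sets of the double fibre are finite
      intro X Y
      haveI := hM X.right Y.right
      exact Finite.of_injective (fun f => f.right) fun f g h =>
        StructuredArrow.ext f g h
    · -- finitely many isomorphism classes in the double fibre
      haveI := (hP s).2
      haveI : ∀ c : IsoCls (StructuredArrow s P), Finite (t ⟶ Q.obj c.out.right) :=
        fun c => hT t (Q.obj c.out.right)
      refine Finite.of_surjective
        (fun p : Σ c : IsoCls (StructuredArrow s P), (t ⟶ Q.obj c.out.right) =>
          (⟦StructuredArrow.mk (Y := p.1.out.right)
            ((p.1.out.hom, p.2) : (s, t) ⟶ (P.prod' Q).obj p.1.out.right)⟧ :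
            IsoCls (StructuredArrow (s, t) (P.prod' Q)))) ?_
      intro x
      obtain ⟨X, rfl⟩ := Quotient.exists_rep x
      set c : IsoCls (StructuredArrow s P) := ⟦StructuredArrow.mk X.hom.1⟧ with hc
      obtain ⟨e⟩ : c.out ≈ StructuredArrow.mk X.hom.1 := Quotient.mk_out _
      set g : c.out.right ⟶ X.right := e.hom.right with hg
      have hw : c.out.hom ≫ P.map g = X.hom.1 := StructuredArrow.w e.hom
      refine ⟨⟨c, X.hom.2 ≫ Groupoid.inv (Q.map g)⟩, ?_⟩
      apply Quotient.sound
      refine ⟨StructuredArrow.isoMk ((Groupoid.isoEquivHom _ _).symm g) ?_⟩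
      have h2 : (X.hom.2 ≫ Groupoid.inv (Q.map g)) ≫ Q.map g = X.hom.2 := by
        rw [Category.assoc, Groupoid.inv_comp, Category.comp_id]
      exact Prod.ext hw h2
  · -- column finiteness
    haveI := (hP s).2
    refine Set.Finite.subset (Set.finite_range
      (fun c : IsoCls (StructuredArrow s P) => (⟦Q.obj c.out.right⟧ : IsoCls T))) ?_
    rintro u ⟨X⟩
    set c : IsoCls (StructuredArrow s P) := ⟦StructuredArrow.mk X.hom.1⟧ with hc
    obtain ⟨e⟩ : c.out ≈ StructuredArrow.mk X.hom.1 := Quotient.mk_out _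
    refine ⟨c, ?_⟩
    have i1 : Q.obj c.out.right ≅ Q.obj X.right :=
      Q.mapIso ((StructuredArrow.proj s P).mapIso e)
    have i2 : u.out ≅ Q.obj X.right := (Groupoid.isoEquivHom _ _).symm X.hom.2
    calc (⟦Q.obj c.out.right⟧ : IsoCls T) = ⟦u.out⟧ := Quotient.sound ⟨i1 ≪≫ i2.symm⟩
      _ = u := Quotient.out_eq u
end

section
/- Let S and T be types, and equip ℚ^T = (T → ℚ) and ℚ^S = (S → ℚ) with the product topologies in which ℚ carries the discrete topology. A ℚ-linear map L : ℚ^T → ℚ^S is continuous if and only if there exists a column-finite matrix A : T → S → ℚ (for every s the set {t | A t s ≠ 0} is finite) such that for all w ∈ ℚ^T and all s ∈ S, (L w) s = Σ_{t : A t s ≠ 0} w t · A t s. -/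
/-- The product topology on `X → ℚ` where `ℚ` carries the discrete topology. -/
def prodDiscreteTopology (X : Type*) : TopologicalSpace (X → ℚ) :=
  @Pi.topologicalSpace X (fun _ => ℚ) (fun _ => ⊥)

/-- A `ℚ`-linear map `ℚ^T → ℚ^S` is continuous for the product topologies (with `ℚ`
discrete) if and only if it is given by multiplication by a column-finite matrix:
`(L w) s = Σ_{t : A t s ≠ 0} w t · A t s`. -/
theorem continuous_iff_columnFinite_matrix {S T : Type*}
    (L : (T → ℚ) →ₗ[ℚ] (S → ℚ)) :
    @Continuous (T → ℚ) (S → ℚ) (prodDiscreteTopology T) (prodDiscreteTopology S) L ↔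
      ∃ (A : T → S → ℚ) (hA : ∀ s, {t | A t s ≠ 0}.Finite),
        ∀ (w : T → ℚ) (s : S), L w s = ∑ t ∈ (hA s).toFinset, w t * A t s := by
  classical
  letI : TopologicalSpace ℚ := ⊥
  haveI : DiscreteTopology ℚ := ⟨rfl⟩
  haveI : ContinuousAdd ℚ := ⟨continuous_of_discreteTopology⟩
  show Continuous L ↔ _
  constructor
  · intro hL
    -- for each s, extract a finite set of coordinates controlling L · s
    have key : ∀ s : S, ∃ F : Finset T,
        ∀ w : T → ℚ, (∀ t ∈ F, w t = 0) → L w s = 0 := by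
      intro s
      have hc : Continuous (fun w : T → ℚ => L w s) :=
        (continuous_apply s).comp hL
      have hopen : IsOpen ((fun w : T → ℚ => L w s) ⁻¹' {0}) :=
        hc.isOpen_preimage _ (isOpen_discrete _)
      have h0 : (0 : T → ℚ) ∈ (fun w : T → ℚ => L w s) ⁻¹' {0} := by
        simp [map_zero]
      rw [isOpen_pi_iff] at hopen
      obtain ⟨I, u, hIu, hsub⟩ := hopen 0 h0
      refine ⟨I, fun w hw => ?_⟩
      have : w ∈ (I : Set T).pi u := by
        intro t ht
        have := (hIu t ht).2
        simpa [hw t ht] using this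
      exact hsub this
    choose F hF using key
    refine ⟨fun t s => L (Pi.single t 1) s, fun s => (F s).finite_toSet.subset ?_, ?_⟩
    · intro t ht
      by_contra htF
      apply ht
      exact hF s (Pi.single t 1) (fun t' ht' => by
        rw [Pi.single_apply]
        simp only [ite_eq_right_iff]
        intro h; exact absurd (h ▸ ht') htF)
    · intro w s
      set w₁ : T → ℚ := fun t => if t ∈ F s then w t else 0 with hw₁
      have hdiff : L (w - w₁) s = 0 := by
        refine hF s _ (fun t ht => ?_)
        simp [hw₁, ht]
      have hLw : L w s = L w₁ s := by
        have := map_sub L w w₁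
        have h2 : L w s - L w₁ s = 0 := by
          have := congrFun this s
          simpa using this.symm.trans hdiff
        linarith
      have hsum : w₁ = ∑ t ∈ F s, w t • (Pi.single t (1 : ℚ) : T → ℚ) := by
        funext t'
        rw [Finset.sum_apply]
        simp only [Pi.smul_apply, Pi.single_apply, smul_eq_mul, mul_ite, mul_one, mul_zero]
        rw [Finset.sum_ite_eq (F s) t' w]
      have hLw₁ : L w₁ s = ∑ t ∈ F s, w t * L (Pi.single t 1) s := by
        rw [hsum, map_sum, Finset.sum_apply]
        simp [map_smul]
      rw [hLw, hLw₁]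
      refine (Finset.sum_subset ?_ ?_).symm
      · intro t ht
        simp only [Set.Finite.mem_toFinset, Set.mem_setOf_eq] at ht
        by_contra htF
        exact ht (hF s (Pi.single t 1) (fun t' ht' => by
          rw [Pi.single_apply]
          simp only [ite_eq_right_iff]
          intro h; exact absurd (h ▸ ht') htF))
      · intro t _ ht
        simp only [Set.Finite.mem_toFinset, Set.mem_setOf_eq, not_not] at ht
        simp [ht]
  · rintro ⟨A, hA, hform⟩
    refine continuous_pi fun s => ?_
    have : (fun w : T → ℚ => L w s) =
        fun w => ∑ t ∈ (hA s).toFinset, w t * A t s := by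
      funext w; exact hform w s
    rw [this]
    refine continuous_finset_sum _ fun t _ => ?_
    exact (continuous_of_discreteTopology (f := fun x : ℚ => x * A t s)).comp
      (continuous_apply t)
end
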